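/- arXiv:1809.07745 — 2 statements merged into one kernel-verified Lean document; each statement's English description precedes it below -/
import Mathlib

section
/- Let X be a topological space, (Y,d) a metric space, Φ : X → Set Y a lower semi-continuous mapping with nonempty values, and ε > 0. Then the mapping x ↦ O_ε(Φ(x)) (the open ε-neighbourhood of Φ(x)) is lower locally constant. -/
open Metric Set

/-- `S ↪ₖ B`: every continuous map of the `k`-sphere (unit sphere of `ℝ^{k+1}`) into `S`
extends to a continuous map of the closed unit `(k+1)`-ball into `B`. -/
def EmbedK {Y : Type*} [TopologicalSpace Y] (k : ℕ) (S B : Set Y) : Prop :=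
  ∀ g : sphere (0 : EuclideanSpace ℝ (Fin (k + 1))) 1 → Y,
    Continuous g → (∀ p, g p ∈ S) →
      ∃ h : closedBall (0 : EuclideanSpace ℝ (Fin (k + 1))) 1 → Y,
        Continuous h ∧ (∀ p, h p ∈ B) ∧
          ∀ p : sphere (0 : EuclideanSpace ℝ (Fin (k + 1))) 1,
            h ⟨p.1, sphere_subset_closedBall p.2⟩ = g p

/-- Lower semi-continuity of a set-valued mapping. -/
def LSC {X Y : Type*} [TopologicalSpace X] [TopologicalSpace Y] (Φ : X → Set Y) : Prop :=
  ∀ U : Set Y, IsOpen U → IsOpen {x | (Φ x ∩ U).Nonempty}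

/-- Lower locally constant set-valued mapping. -/
def LowerLocallyConstant {X Y : Type*} [TopologicalSpace X] [TopologicalSpace Y]
    (φ : X → Set Y) : Prop :=
  ∀ K : Set Y, IsCompact K → IsOpen {x | K ⊆ φ x}

/-- `dim X ≤ m`: every open cover has an open refinement (still a cover) such that any
`m + 2` pairwise distinct members of the refinement have empty intersection. -/
def DimLE (X : Type*) [TopologicalSpace X] (m : ℤ) : Prop :=
  ∀ 𝒰 : Set (Set X), (∀ U ∈ 𝒰, IsOpen U) → ⋃₀ 𝒰 = univ →
    ∃ 𝒱 : Set (Set X), (∀ V ∈ 𝒱, IsOpen V) ∧ ⋃₀ 𝒱 = univ ∧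
      (∀ V ∈ 𝒱, ∃ U ∈ 𝒰, V ⊆ U) ∧
      ∀ σ : Finset (Set X), ↑σ ⊆ 𝒱 → (σ.card : ℤ) = m + 2 → ⋂₀ (σ : Set (Set X)) = ∅

/-- The open `ε`-neighbourhood `O_ε(S)` of a set `S` in a metric space. -/
def ONbhd {Y : Type*} [PseudoMetricSpace Y] (ε : ℝ) (S : Set Y) : Set Y :=
  ⋃ y ∈ S, ball y ε

/-- Proposition 5.2: the open ε-neighbourhood of an l.s.c. mapping is lower locally
constant. -/
theorem lsc_neighbourhood_lowerLocallyConstant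
    {X Y : Type*} [TopologicalSpace X] [MetricSpace Y]
    (Φ : X → Set Y) (hne : ∀ x, (Φ x).Nonempty) (hlsc : LSC Φ)
    (ε : ℝ) (hε : 0 < ε) :
    LowerLocallyConstant (fun x => ONbhd ε (Φ x)) := by
  intro K hK
  rw [isOpen_iff_forall_mem_open]
  intro x₀ hx₀
  simp only [mem_setOf_eq] at hx₀
  -- for each y ∈ K pick z y ∈ Φ x₀ with dist y (z y) < ε
  have hz : ∀ y ∈ K, ∃ z ∈ Φ x₀, dist y z < ε := by
    intro y hy
    have := hx₀ hy
    simp only [ONbhd, mem_iUnion, mem_ball] at this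
    obtain ⟨z, hz, hd⟩ := this
    exact ⟨z, hz, hd⟩
  choose! z hzΦ hzd using hz
  set r : Y → ℝ := fun y => (ε - dist y (z y)) / 2 with hr
  have hrpos : ∀ y ∈ K, 0 < r y := fun y hy => by
    have := hzd y hy; simp only [hr]; linarith
  -- cover K by balls of radius r y
  obtain ⟨t, ht, hcov⟩ := hK.elim_nhds_subcover (fun y => ball y (r y))
    (fun y hy => ball_mem_nhds y (hrpos y hy))
  -- the open neighbourhood of x₀
  refine ⟨⋂ y ∈ t, {x | (Φ x ∩ ball (z y) (r y)).Nonempty}, ?_, ?_, ?_⟩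
  · intro x hx
    simp only [mem_iInter, mem_setOf_eq] at hx
    simp only [mem_setOf_eq]
    intro y hy
    obtain ⟨i, hi, hyi⟩ := by
      have := hcov hy
      simpa only [mem_iUnion, exists_prop] using this
    obtain ⟨w, hwΦ, hwb⟩ := hx i hi
    simp only [ONbhd, mem_iUnion, mem_ball]
    refine ⟨w, hwΦ, ?_⟩
    have h1 : dist y i < r i := mem_ball.mp hyi
    have h2 : dist w (z i) < r i := mem_ball.mp hwb
    have h3 : dist i (z i) < ε := hzd i (ht i hi)
    have : dist w y ≤ dist w (z i) + dist (z i) i + dist i y :=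
      dist_triangle4 w (z i) i y
    rw [dist_comm (z i) i, dist_comm i y] at this
    simp only [hr] at h1 h2
    have h4 : dist y w = dist w y := dist_comm y w
    linarith
  · exact isOpen_biInter_finset fun y _ => hlsc _ isOpen_ball
  · simp only [mem_iInter, mem_setOf_eq]
    intro y hy
    exact ⟨z y, hzΦ y (ht y hy), mem_ball_self (hrpos y (ht y hy))⟩
end

section
/- Let X be a topological space, (Y,d) a complete metric space, ξ : (0,∞) → (0,∞) a function with ξ(ε) ≤ ε for all ε > 0, and Φ : X → Set Y a mapping with nonempty values such that: for every ε > 0, every continuous ξ(ε)-selection g : X → Y for Φ, and every μ > 0, the mapping x ↦ O_μ(Φ(x)) ∩ O_ε(g(x)) has a continuous selection. Then for every ε > 0 and every continuous ξ(ε/2)-selection g : X → Y for Φ, the mapping x ↦ closure(Φ(x)) ∩ O_ε(g(x)) has a continuous selection. -/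
open Metric Set

/-- Proposition 5.3. -/
theorem approximate_to_exact_selection
    {X Y : Type*} [TopologicalSpace X] [MetricSpace Y] [CompleteSpace Y]
    (ξ : ℝ → ℝ) (hξpos : ∀ ε > 0, 0 < ξ ε) (hξle : ∀ ε > 0, ξ ε ≤ ε)
    (Φ : X → Set Y) (hne : ∀ x, (Φ x).Nonempty)
    (H : ∀ ε > (0 : ℝ), ∀ g : X → Y, Continuous g →
      (∀ x, g x ∈ ONbhd (ξ ε) (Φ x)) → ∀ μ > (0 : ℝ),
        ∃ f : X → Y, Continuous f ∧ ∀ x, f x ∈ ONbhd μ (Φ x) ∩ ball (g x) ε) :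
    ∀ ε > (0 : ℝ), ∀ g : X → Y, Continuous g →
      (∀ x, g x ∈ ONbhd (ξ (ε / 2)) (Φ x)) →
      ∃ f : X → Y, Continuous f ∧ ∀ x, f x ∈ closure (Φ x) ∩ ball (g x) ε := by
  intro ε hε g hg hgsel
  have hpow : ∀ n : ℕ, (0 : ℝ) < ε / 2 ^ (n + 1) := fun n => by positivity
  have step : ∀ n : ℕ, ∀ h : X → Y, Continuous h →
      (∀ x, h x ∈ ONbhd (ξ (ε / 2 ^ (n + 1))) (Φ x)) →
      ∃ f : X → Y, Continuous f ∧ (∀ x, f x ∈ ONbhd (ξ (ε / 2 ^ (n + 2))) (Φ x)) ∧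
        ∀ x, dist (f x) (h x) < ε / 2 ^ (n + 1) := by
    intro n h hc hsel
    obtain ⟨f, hfc, hf⟩ := H (ε / 2 ^ (n + 1)) (hpow n) h hc hsel (ξ (ε / 2 ^ (n + 2)))
      (hξpos _ (hpow (n + 1)))
    exact ⟨f, hfc, fun x => (hf x).1, fun x => mem_ball.mp (hf x).2⟩
  choose! T hTc hTsel hTd using step
  set F : ℕ → X → Y := fun n => Nat.rec g (fun k fk => T k fk) n with hFdef
  have hFs : ∀ n, F (n + 1) = T n (F n) := fun n => rfl
  have key : ∀ n, Continuous (F n) ∧ ∀ x, F n x ∈ ONbhd (ξ (ε / 2 ^ (n + 1))) (Φ x) := by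
    intro n
    induction n with
    | zero =>
        refine ⟨hg, ?_⟩
        have : ε / 2 ^ (0 + 1) = ε / 2 := by norm_num
        rw [this]; exact hgsel
    | succ k ih => exact ⟨hTc k (F k) ih.1 ih.2, hTsel k (F k) ih.1 ih.2⟩
  have hd : ∀ x n, dist (F n x) (F (n + 1) x) ≤ (ε / 2) * (1 / 2) ^ n := by
    intro x n
    have := hTd n (F n) (key n).1 (key n).2 x
    rw [dist_comm] at this
    have heq : ε / 2 ^ (n + 1) = (ε / 2) * (1 / 2) ^ n := by
      rw [pow_succ, one_div, inv_pow]; ring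
    rw [hFs n]
    linarith [heq ▸ this]
  have hr : (1 / 2 : ℝ) < 1 := by norm_num
  have hcau : ∀ x, CauchySeq fun n => F n x := fun x =>
    cauchySeq_of_le_geometric (1 / 2) (ε / 2) hr (hd x)
  choose a ha using fun x => cauchySeq_tendsto_of_complete (hcau x)
  have hdista : ∀ x n, dist (F n x) (a x) ≤ ε * (1 / 2) ^ n := by
    intro x n
    have := dist_le_of_le_geometric_of_tendsto (1 / 2) (ε / 2) hr (hd x) (ha x) n
    have h2 : (ε / 2) * (1 / 2) ^ n / (1 - 1 / 2) = ε * (1 / 2) ^ n := by ring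
    linarith [h2 ▸ this]
  have hlim : Filter.Tendsto (fun n : ℕ => ε * (1 / 2) ^ n) Filter.atTop (nhds 0) := by
    simpa using (tendsto_pow_atTop_nhds_zero_of_lt_one (by norm_num) hr).const_mul ε
  have hconta : Continuous a := by
    have hu : TendstoUniformly (fun n x => F n x) a Filter.atTop := by
      rw [Metric.tendstoUniformly_iff]
      intro δ hδ
      filter_upwards [hlim.eventually (gt_mem_nhds hδ)] with n hn x
      calc dist (a x) (F n x) = dist (F n x) (a x) := dist_comm _ _
        _ ≤ ε * (1 / 2) ^ n := hdista x n
        _ < δ := hn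
    exact hu.continuous (Filter.Frequently.of_forall fun n => (key n).1)
  refine ⟨a, hconta, fun x => ⟨?_, ?_⟩⟩
  · rw [Metric.mem_closure_iff]
    intro δ hδ
    obtain ⟨n, hn⟩ := exists_pow_lt_of_lt_one (show (0:ℝ) < δ / (2 * ε + 1) by positivity) hr
    obtain ⟨y, hy, hby⟩ := by
      have := (key n).2 x
      simpa only [ONbhd, mem_iUnion, exists_prop] using this
    refine ⟨y, hy, ?_⟩
    have h1 : dist (F n x) y < ξ (ε / 2 ^ (n + 1)) := mem_ball.mp hby
    have h2 : ξ (ε / 2 ^ (n + 1)) ≤ ε / 2 ^ (n + 1) := hξle _ (hpow n)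
    have h3 : ε / 2 ^ (n + 1) ≤ ε * (1 / 2) ^ n := by
      have heq : ε / 2 ^ (n + 1) = (ε / 2) * (1 / 2) ^ n := by rw [pow_succ, one_div, inv_pow]; ring
      rw [heq]
      nlinarith [pow_pos (show (0:ℝ) < 1/2 by norm_num) n]
    have h4 : ε * (1 / 2) ^ n < δ / 2 := by
      have hεle : (2 * ε + 1) * (δ / (2 * ε + 1)) = δ := by field_simp
      nlinarith [pow_pos (show (0:ℝ) < 1/2 by norm_num) n]
    calc dist (a x) y ≤ dist (a x) (F n x) + dist (F n x) y := dist_triangle _ _ _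
      _ ≤ ε * (1 / 2) ^ n + ε * (1 / 2) ^ n := by
          have := hdista x n
          rw [dist_comm] at this
          linarith
      _ < δ := by linarith
  · rw [mem_ball]
    have h1 : dist (a x) (F 1 x) ≤ ε * (1 / 2) := by
      have := hdista x 1
      rw [dist_comm] at this
      simpa using this
    have h2 : dist (F 1 x) (g x) < ε / 2 := by
      have := hTd 0 (F 0) (key 0).1 (key 0).2 x
      have h0 : F 0 = g := rfl
      rw [← hFs 0, h0] at this
      simpa using this
    calc dist (a x) (g x) ≤ dist (a x) (F 1 x) + dist (F 1 x) (g x) := dist_triangle _ _ _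
      _ < ε := by linarith
end
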